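/- Let H₁,...,H_m be structure matrices of graphs Ḡ₁,...,Ḡ_m that are jointly connected, and let τ₁,...,τ_m be positive reals with Σᵢ τᵢ = 1. Then every eigenvalue of Σᵢ τᵢ Hᵢ has strictly positive real part. -/

import Mathlib

open Matrix Finset

/-- let `Hᵢ = Lᵢ + Dᵢ` be the structure matrices of jointly connected
leader-follower graphs `Ḡ₁,…,Ḡ_m` (i.e. in the union graph node `0` is reachable to
every other node), and let `τ₁,…,τ_m > 0` with `∑ τᵢ = 1`.  Then every eigenvalue of
`∑ᵢ τᵢ Hᵢ` has strictly positive real part. -/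
theorem convex_combination_structure_matrices_spectrum_pos_re {N m : ℕ}
    (a : Fin m → Fin N → Fin N → ℝ) (ha : ∀ k i j, a k i j = 0 ∨ a k i j = 1)
    (ha0 : ∀ k i, a k i i = 0)
    (d : Fin m → Fin N → ℝ) (hd : ∀ k i, d k i = 0 ∨ d k i = 1)
    (hconn : ∀ i : Fin N,
      Relation.ReflTransGen
        (fun u v : Option (Fin N) =>
          match u, v with
          | none, some i => ∃ k, d k i = 1
          | some j, some i => ∃ k, a k i j = 1
          | _, none => False)
        none (some i))
    (τ : Fin m → ℝ) (hτpos : ∀ k, 0 < τ k) (hτsum : ∑ k, τ k = 1) :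
    ∀ μ ∈ spectrum ℂ
      ((∑ k : Fin m,
          τ k • (Matrix.diagonal (fun i => ∑ j ∈ Finset.univ.erase i, a k i j) - Matrix.of (a k)
            + Matrix.diagonal (d k))).map (Complex.ofReal)),
      0 < μ.re := by
  intro μ hμ
  by_contra hre
  push_neg at hre
  set Hc := ((∑ k : Fin m,
          τ k • (Matrix.diagonal (fun i => ∑ j ∈ Finset.univ.erase i, a k i j) - Matrix.of (a k)
            + Matrix.diagonal (d k))).map (Complex.ofReal)) with hHc
  set A : Fin N → Fin N → ℝ := fun i j => ∑ k, τ k * a k i j with hAdef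
  set Dv : Fin N → ℝ := fun i => ∑ k, τ k * d k i with hDdef
  set S : Fin N → ℝ := fun i => ∑ j, A i j with hSdef
  have hann : ∀ k i j, (0:ℝ) ≤ a k i j := fun k i j => by rcases ha k i j with h|h <;> simp [h]
  have hdnn : ∀ k i, (0:ℝ) ≤ d k i := fun k i => by rcases hd k i with h|h <;> simp [h]
  have hAnn : ∀ i j, 0 ≤ A i j := fun i j =>
    Finset.sum_nonneg fun k _ => mul_nonneg (hτpos k).le (hann k i j)
  have hDnn : ∀ i, 0 ≤ Dv i := fun i =>
    Finset.sum_nonneg fun k _ => mul_nonneg (hτpos k).le (hdnn k i)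
  have hSnn : ∀ i, 0 ≤ S i := fun i => Finset.sum_nonneg fun j _ => hAnn i j
  have hAii : ∀ i, A i i = 0 := fun i => Finset.sum_eq_zero fun k _ => by rw [ha0]; ring
  have hApos : ∀ k i j, a k i j = 1 → 0 < A i j := by
    intro k i j h
    have h2 : τ k * a k i j ≤ A i j :=
      Finset.single_le_sum (fun k' _ => mul_nonneg (hτpos k').le (hann k' i j)) (mem_univ k)
    rw [h, mul_one] at h2
    exact lt_of_lt_of_le (hτpos k) h2
  have hDpos : ∀ k i, d k i = 1 → 0 < Dv i := by
    intro k i h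
    have h2 : τ k * d k i ≤ Dv i :=
      Finset.single_le_sum (fun k' _ => mul_nonneg (hτpos k').le (hdnn k' i)) (mem_univ k)
    rw [h, mul_one] at h2
    exact lt_of_lt_of_le (hτpos k) h2
  -- eigenvector
  rw [spectrum.mem_iff] at hμ
  have hdet : (algebraMap ℂ (Matrix (Fin N) (Fin N) ℂ) μ - Hc).det = 0 := by
    by_contra h
    exact hμ ((Matrix.isUnit_iff_isUnit_det _).2 (isUnit_iff_ne_zero.2 h))
  obtain ⟨v, hv0, hv⟩ := Matrix.exists_mulVec_eq_zero_iff.2 hdet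
  have hev : Hc *ᵥ v = μ • v := by
    have h1 : (algebraMap ℂ (Matrix (Fin N) (Fin N) ℂ) μ - Hc) *ᵥ v = μ • v - Hc *ᵥ v := by
      rw [Matrix.sub_mulVec, Algebra.algebraMap_eq_smul_one, Matrix.smul_mulVec,
        Matrix.one_mulVec]
    rw [h1] at hv
    exact (sub_eq_zero.mp hv).symm
  -- entry formula
  have hent : ∀ i j, Hc i j = Complex.ofReal ((if i = j then S i + Dv i else 0) - A i j) := by
    intro i j
    rw [hHc, Matrix.map_apply]
    congr 1
    rw [Matrix.sum_apply]
    by_cases h : i = j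
    · subst h
      rw [if_pos rfl, hAii, sub_zero]
      have e1 : ∀ k : Fin m,
          (τ k • ((Matrix.diagonal fun i => ∑ j ∈ Finset.univ.erase i, a k i j)
            - Matrix.of (a k) + Matrix.diagonal (d k))) i i
          = τ k * (∑ j', a k i j') + τ k * d k i := by
        intro k
        simp only [Matrix.smul_apply, Matrix.add_apply, Matrix.sub_apply,
          Matrix.diagonal_apply_eq, Matrix.of_apply, smul_eq_mul, ha0, sub_zero]
        rw [Finset.sum_erase _ (ha0 k i)]
        ring
      rw [Finset.sum_congr rfl fun k _ => e1 k, Finset.sum_add_distrib]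
      congr 1
      rw [hSdef]
      simp only [hAdef, Finset.mul_sum]
      exact Finset.sum_comm
    · rw [if_neg h, zero_sub]
      have e2 : ∀ k : Fin m,
          (τ k • ((Matrix.diagonal fun i => ∑ j ∈ Finset.univ.erase i, a k i j)
            - Matrix.of (a k) + Matrix.diagonal (d k))) i j
          = -(τ k * a k i j) := by
        intro k
        simp only [Matrix.smul_apply, Matrix.add_apply, Matrix.sub_apply,
          Matrix.diagonal_apply_ne _ h, Matrix.of_apply, smul_eq_mul]
        ring
      rw [Finset.sum_congr rfl fun k _ => e2 k]
      simp [hAdef]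
  -- row equation
  have hrow : ∀ i, ((↑(S i + Dv i) : ℂ) - μ) * v i = ∑ j, (↑(A i j) : ℂ) * v j := by
    intro i
    have h1 := congrFun hev i
    rw [Matrix.mulVec, Pi.smul_apply, smul_eq_mul, dotProduct] at h1
    simp only [hent, Complex.ofReal_sub, apply_ite Complex.ofReal, Complex.ofReal_zero,
      sub_mul, Finset.sum_sub_distrib, ite_mul, zero_mul, Finset.sum_ite_eq,
      Finset.mem_univ, if_true] at h1
    linear_combination h1
  have hbound : ∀ i, ‖∑ j, (↑(A i j) : ℂ) * v j‖ ≤ ∑ j, A i j * ‖v j‖ := by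
    intro i
    refine le_trans (norm_sum_le _ _) (le_of_eq ?_)
    refine Finset.sum_congr rfl fun j _ => ?_
    rw [norm_mul, Complex.norm_real, Real.norm_eq_abs, abs_of_nonneg (hAnn i j)]
  -- max element
  have hex : ∃ i, v i ≠ 0 := by
    by_contra h
    push_neg at h
    exact hv0 (funext h)
  obtain ⟨i1, hi1⟩ := hex
  obtain ⟨i0, -, hi0⟩ := Finset.exists_max_image Finset.univ (fun i => ‖v i‖)
    ⟨i1, Finset.mem_univ i1⟩
  set M := ‖v i0‖ with hM
  have hmax : ∀ j, ‖v j‖ ≤ M := fun j => hi0 j (mem_univ j)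
  have hMpos : 0 < M := lt_of_lt_of_le (by simpa using hi1) (hmax i1)
  have hsumle : ∀ i, ∑ j, A i j * ‖v j‖ ≤ S i * M := by
    intro i
    calc ∑ j, A i j * ‖v j‖ ≤ ∑ j, A i j * M :=
          Finset.sum_le_sum fun j _ => mul_le_mul_of_nonneg_left (hmax j) (hAnn i j)
      _ = S i * M := (Finset.sum_mul _ _ _).symm
  have hkey : ∀ i, ‖(↑(S i + Dv i) : ℂ) - μ‖ * ‖v i‖ ≤ S i * M := by
    intro i
    rw [← norm_mul, hrow i]
    exact le_trans (hbound i) (hsumle i)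
  have h0 : ‖(↑(S i0 + Dv i0) : ℂ) - μ‖ ≤ S i0 :=
    le_of_mul_le_mul_right (hkey i0) hMpos
  have hnsq : (S i0 + Dv i0 - μ.re)^2 + μ.im^2 ≤ (S i0)^2 := by
    have h2 : (‖(↑(S i0 + Dv i0) : ℂ) - μ‖)^2 ≤ (S i0)^2 :=
      pow_le_pow_left₀ (norm_nonneg _) h0 2
    rw [Complex.sq_norm, Complex.normSq_apply] at h2
    simp only [Complex.sub_re, Complex.sub_im, Complex.ofReal_re, Complex.ofReal_im,
      zero_sub] at h2
    nlinarith [h2]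
  have hre0 : μ.re = 0 := le_antisymm hre (by nlinarith [hnsq, hDnn i0, hSnn i0, sq_nonneg μ.im])
  have him0 : μ.im = 0 := by
    have h3 : μ.im ^ 2 ≤ 0 := by nlinarith [hnsq, hDnn i0, hSnn i0]
    have h4 : μ.im ^ 2 = 0 := le_antisymm h3 (sq_nonneg _)
    exact pow_eq_zero_iff two_ne_zero |>.mp h4
  have hμ0 : μ = 0 := Complex.ext hre0 him0
  subst hμ0
  -- propagation of maximality
  have hprop : ∀ i, ‖v i‖ = M →
      Dv i = 0 ∧ ∀ j, 0 < A i j → ‖v j‖ = M := by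
    intro i hiM
    have heq1 : (S i + Dv i) * M = ‖∑ j, (↑(A i j) : ℂ) * v j‖ := by
      rw [← hrow i, sub_zero, norm_mul, Complex.norm_real, Real.norm_eq_abs,
        abs_of_nonneg (add_nonneg (hSnn i) (hDnn i)), hiM]
    have hle : ‖∑ j, (↑(A i j) : ℂ) * v j‖ ≤ ∑ j, A i j * ‖v j‖ :=
      hbound i
    have hle2 := hsumle i
    have hD : Dv i = 0 := by nlinarith [hMpos, hDnn i]
    refine ⟨hD, ?_⟩
    have heq2 : ∑ j, A i j * ‖v j‖ = ∑ j, A i j * M := by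
      have hge : S i * M ≤ ∑ j, A i j * ‖v j‖ := by
        rw [hD, add_zero] at heq1
        rw [heq1]; exact hle
      have he : ∑ j, A i j * M = S i * M := (Finset.sum_mul _ _ _).symm
      rw [he]
      exact le_antisymm hle2 hge
    have hzero : ∀ j ∈ Finset.univ, A i j * (M - ‖v j‖) = 0 := by
      refine (Finset.sum_eq_zero_iff_of_nonneg ?_).mp ?_
      · exact fun j _ => mul_nonneg (hAnn i j) (sub_nonneg.mpr (hmax j))
      · have : ∑ j, A i j * (M - ‖v j‖)
            = ∑ j, A i j * M - ∑ j, A i j * ‖v j‖ := by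
          rw [← Finset.sum_sub_distrib]
          exact Finset.sum_congr rfl fun j _ => by ring
        rw [this, heq2, sub_self]
    intro j hj
    have h5 := hzero j (mem_univ j)
    rcases mul_eq_zero.mp h5 with h|h
    · exact absurd h (ne_of_gt hj)
    · linarith [sub_eq_zero.mp h]
  -- path induction: no node reachable from the leader can have maximal modulus
  have hpath : ∀ u : Option (Fin N),
      Relation.ReflTransGen
        (fun u v : Option (Fin N) =>
          match u, v with
          | none, some i => ∃ k, d k i = 1
          | some j, some i => ∃ k, a k i j = 1
          | _, none => False)
        none u →
      ∀ i, u = some i → ‖v i‖ ≠ M := by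
    intro u hu
    induction hu with
    | refl => intro i h; exact absurd h (by simp)
    | @tail b c hb hbc ih =>
      intro i hceq hiM
      subst hceq
      obtain ⟨hDi, hnb⟩ := hprop i hiM
      cases b with
      | none =>
        obtain ⟨k, hk⟩ := hbc
        exact absurd hDi (ne_of_gt (hDpos k i hk))
      | some j =>
        obtain ⟨k, hk⟩ := hbc
        exact ih j rfl (hnb j (hApos k i j hk))
  exact hpath (some i0) (hconn i0) i0 rfl rfl
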